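/- Every graph that contains no induced subgraph isomorphic to the claw K_{1,3} and has no K_5 minor has maximum degree at most 6. -/

import Mathlib

open SimpleGraph

/-- `H` is a minor of `G`: there is a family of pairwise disjoint nonempty connected
branch sets in `G`, one for each vertex of `H`, with an edge of `G` between the branch
sets of any two adjacent vertices of `H`. -/
def SimpleGraph.HasMinor {V W : Type*} (G : SimpleGraph V) (H : SimpleGraph W) : Prop :=
  ∃ f : W → Set V,
    (∀ w, (f w).Nonempty) ∧
    (∀ w, (G.induce (f w)).Connected) ∧
    (∀ w₁ w₂, w₁ ≠ w₂ → Disjoint (f w₁) (f w₂)) ∧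
    (∀ w₁ w₂, H.Adj w₁ w₂ → ∃ v₁ ∈ f w₁, ∃ v₂ ∈ f w₂, G.Adj v₁ v₂)

/-- `G` contains no induced subgraph isomorphic to the claw `K_{1,3}`. -/
def SimpleGraph.ClawFree {V : Type*} (G : SimpleGraph V) : Prop :=
  IsEmpty (completeBipartiteGraph (Fin 1) (Fin 3) ↪g G)

/-- `s` is a maximal clique of `G`. -/
def SimpleGraph.IsMaxClique {V : Type*} (G : SimpleGraph V) (s : Set V) : Prop :=
  G.IsClique s ∧ ∀ t : Set V, G.IsClique t → s ⊆ t → s = t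

/-- `c` is a clique-coloring of `G`: no maximal clique with at least two vertices
is monochromatic. -/
def SimpleGraph.IsCliqueColoring {V : Type*} (G : SimpleGraph V) {k : ℕ} (c : V → Fin k) : Prop :=
  ∀ s : Set V, G.IsMaxClique s → s.Nontrivial → ∃ u ∈ s, ∃ v ∈ s, c u ≠ c v

/-- `G` is `k`-clique-colorable. -/
def SimpleGraph.CliqueColorable {V : Type*} (G : SimpleGraph V) (k : ℕ) : Prop :=
  ∃ c : V → Fin k, G.IsCliqueColoring c

/-- `G` is an odd cycle, i.e. isomorphic to `C_n` for some odd `n ≥ 3`. -/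
def SimpleGraph.IsOddCycle {V : Type*} (G : SimpleGraph V) : Prop :=
  ∃ n : ℕ, 3 ≤ n ∧ Odd n ∧ Nonempty (G ≃g cycleGraph n)

/-- `D` meets every (nonempty) maximal clique of `G`. -/
def SimpleGraph.IsCliqueTransversal {V : Type*} (G : SimpleGraph V) (D : Set V) : Prop :=
  ∀ s : Set V, G.IsMaxClique s → s.Nonempty → (D ∩ s).Nonempty

/-- `G` is `H`-minor-free, but adding any edge between two distinct nonadjacent
vertices creates an `H` minor. -/
def SimpleGraph.EdgeMaximalMinorFree {V W : Type*} (G : SimpleGraph V) (H : SimpleGraph W) : Prop :=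
  ¬ G.HasMinor H ∧ ∀ u v : V, u ≠ v → ¬ G.Adj u v →
    (G ⊔ fromEdgeSet {s(u, v)}).HasMinor H

set_option linter.unusedSectionVars false
set_option linter.unusedVariables false
set_option maxHeartbeats 1000000

section Aux
variable {α : Type*} [DecidableEq α]

lemma exists3' {s : Finset α} (h : 3 ≤ s.card) :
    ∃ a b c, a ∈ s ∧ b ∈ s ∧ c ∈ s ∧ a ≠ b ∧ a ≠ c ∧ b ≠ c := by
  have hpos : 0 < s.card := by omega
  obtain ⟨a, ha⟩ := Finset.card_pos.mp hpos
  have h2 : 1 < (s.erase a).card := by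
    have := Finset.card_erase_of_mem ha; omega
  obtain ⟨b, hb, c, hc, hbc⟩ := Finset.one_lt_card.mp h2
  exact ⟨a, b, c, ha, Finset.mem_of_mem_erase hb, Finset.mem_of_mem_erase hc,
    (Finset.ne_of_mem_erase hb).symm, (Finset.ne_of_mem_erase hc).symm, hbc⟩

lemma exists4' {s : Finset α} (h : 4 ≤ s.card) :
    ∃ a b c d, a ∈ s ∧ b ∈ s ∧ c ∈ s ∧ d ∈ s ∧
      a ≠ b ∧ a ≠ c ∧ a ≠ d ∧ b ≠ c ∧ b ≠ d ∧ c ≠ d := by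
  have hpos : 0 < s.card := by omega
  obtain ⟨a, ha⟩ := Finset.card_pos.mp hpos
  have h3 : 3 ≤ (s.erase a).card := by
    have := Finset.card_erase_of_mem ha; omega
  obtain ⟨b, c, d, hb, hc, hd, h1, h2, h3'⟩ := exists3' h3
  exact ⟨a, b, c, d, ha, Finset.mem_of_mem_erase hb, Finset.mem_of_mem_erase hc,
    Finset.mem_of_mem_erase hd,
    (Finset.ne_of_mem_erase hb).symm, (Finset.ne_of_mem_erase hc).symm,
    (Finset.ne_of_mem_erase hd).symm, h1, h2, h3'⟩

lemma other2 {s : Finset α} {t : α} (hc : s.card = 2) (ht : t ∈ s) :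
    ∃ r, r ≠ t ∧ s = {t, r} := by
  obtain ⟨a, b, hab, rfl⟩ := Finset.card_eq_two.mp hc
  simp only [Finset.mem_insert, Finset.mem_singleton] at ht
  rcases ht with rfl | rfl
  · exact ⟨b, hab.symm, rfl⟩
  · exact ⟨a, hab, Finset.pair_comm a t⟩

lemma cardle2 (a b : α) : ({a, b} : Finset α).card ≤ 2 := by
  apply (Finset.card_insert_le _ _).trans; simp

lemma cardle3 (a b c : α) : ({a, b, c} : Finset α).card ≤ 3 := by
  apply (Finset.card_insert_le _ _).trans
  have := cardle2 b c; omega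

lemma cardle4 (a b c d : α) : ({a, b, c, d} : Finset α).card ≤ 4 := by
  apply (Finset.card_insert_le _ _).trans
  have := cardle3 b c d; omega

lemma cardle5 (a b c d e : α) : ({a, b, c, d, e} : Finset α).card ≤ 5 := by
  apply (Finset.card_insert_le _ _).trans
  have := cardle4 b c d e; omega

lemma cardeq3 {a b c : α} (h1 : a ≠ b) (h2 : a ≠ c) (h4 : b ≠ c) :
    ({a, b, c} : Finset α).card = 3 := by
  rw [Finset.card_insert_of_notMem (by simp [h1, h2]),
    Finset.card_insert_of_notMem (by simp [h4]), Finset.card_singleton]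

lemma cardeq4 {a b c d : α} (h1 : a ≠ b) (h2 : a ≠ c) (h3 : a ≠ d)
    (h4 : b ≠ c) (h5 : b ≠ d) (h6 : c ≠ d) :
    ({a, b, c, d} : Finset α).card = 4 := by
  rw [Finset.card_insert_of_notMem (by simp [h1, h2, h3]), cardeq3 h4 h5 h6]

lemma cardeq5 {a b c d e : α} (h1 : a ≠ b) (h2 : a ≠ c) (h3 : a ≠ d) (h4 : a ≠ e)
    (h5 : b ≠ c) (h6 : b ≠ d) (h7 : b ≠ e) (h8 : c ≠ d) (h9 : c ≠ e) (h10 : d ≠ e) :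
    ({a, b, c, d, e} : Finset α).card = 5 := by
  rw [Finset.card_insert_of_notMem (by simp [h1, h2, h3, h4]), cardeq4 h5 h6 h7 h8 h9 h10]

end Aux
def HubSet {V : Type*} (G : SimpleGraph V) (s : Set V) : Prop :=
  ∃ h ∈ s, ∀ x ∈ s, x = h ∨ G.Adj h x

section Graph7
variable {H : SimpleGraph (Fin 7)} [DecidableRel H.Adj]

lemma hub_single (x : Fin 7) : HubSet H {x} := ⟨x, rfl, fun y hy => Or.inl hy⟩

lemma hub_pair {a b : Fin 7} (h : H.Adj a b) : HubSet H {a, b} := by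
  refine ⟨a, Or.inl rfl, ?_⟩
  rintro x (rfl | rfl)
  · exact Or.inl rfl
  · exact Or.inr h

lemma hub_triple {a b c : Fin 7} (h1 : H.Adj b a) (h2 : H.Adj b c) :
    HubSet H {a, b, c} := by
  refine ⟨b, by simp, ?_⟩
  rintro x (rfl | rfl | rfl)
  · exact Or.inr h1
  · exact Or.inl rfl
  · exact Or.inr h2

lemma hub_quad {v a b c : Fin 7} (h1 : H.Adj v a) (h2 : H.Adj v b) (h3 : H.Adj v c) :
    HubSet H {v, a, b, c} := by
  refine ⟨v, by simp, ?_⟩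
  rintro x (rfl | rfl | rfl | rfl)
  · exact Or.inl rfl
  · exact Or.inr h1
  · exact Or.inr h2
  · exact Or.inr h3

def AdjSets (H : SimpleGraph (Fin 7)) (s t : Set (Fin 7)) : Prop :=
  ∃ a ∈ s, ∃ b ∈ t, H.Adj a b

lemma AdjSets.symm' {s t : Set (Fin 7)} (h : AdjSets H s t) : AdjSets H t s := by
  obtain ⟨a, ha, b, hb, hab⟩ := h
  exact ⟨b, hb, a, ha, hab.symm⟩

lemma build4 {s0 s1 s2 s3 : Set (Fin 7)}
    (h0 : HubSet H s0) (h1 : HubSet H s1) (h2 : HubSet H s2) (h3 : HubSet H s3)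
    (d01 : Disjoint s0 s1) (d02 : Disjoint s0 s2) (d03 : Disjoint s0 s3)
    (d12 : Disjoint s1 s2) (d13 : Disjoint s1 s3) (d23 : Disjoint s2 s3)
    (a01 : AdjSets H s0 s1) (a02 : AdjSets H s0 s2) (a03 : AdjSets H s0 s3)
    (a12 : AdjSets H s1 s2) (a13 : AdjSets H s1 s3) (a23 : AdjSets H s2 s3) :
    ∃ s : Fin 4 → Set (Fin 7),
      (∀ i, HubSet H (s i)) ∧
      (∀ i j, i ≠ j → Disjoint (s i) (s j)) ∧
      (∀ i j, i ≠ j → ∃ a ∈ s i, ∃ b ∈ s j, H.Adj a b) := by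
  refine ⟨![s0, s1, s2, s3], ?_, ?_, ?_⟩
  · intro i; fin_cases i <;> simpa
  · intro i j hij
    fin_cases i <;> fin_cases j <;>
      simp only [Matrix.cons_val_zero, Matrix.cons_val_one, Matrix.head_cons,
        Matrix.cons_val_two, Matrix.tail_cons, Matrix.cons_val_three, Fin.mk_zero,
        Fin.mk_one] <;>
      first
        | exact absurd rfl hij
        | exact d01 | exact d02 | exact d03 | exact d12 | exact d13 | exact d23
        | exact d01.symm | exact d02.symm | exact d03.symm
        | exact d12.symm | exact d13.symm | exact d23.symm
  · intro i j hij
    fin_cases i <;> fin_cases j <;>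
      simp only [Matrix.cons_val_zero, Matrix.cons_val_one, Matrix.head_cons,
        Matrix.cons_val_two, Matrix.tail_cons, Matrix.cons_val_three, Fin.mk_zero,
        Fin.mk_one] <;>
      first
        | exact absurd rfl hij
        | exact a01 | exact a02 | exact a03 | exact a12 | exact a13 | exact a23
        | exact a01.symm' | exact a02.symm' | exact a03.symm'
        | exact a12.symm' | exact a13.symm' | exact a23.symm'

end Graph7
namespace K7Lemma

variable (H : SimpleGraph (Fin 7)) [DecidableRel H.Adj]

def NB (v : Fin 7) : Finset (Fin 7) := H.neighborFinset v

def WW (v : Fin 7) : Finset (Fin 7) :=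
  Finset.univ.filter (fun x => ¬H.Adj v x ∧ x ≠ v)

def NI (v u : Fin 7) : Finset (Fin 7) := (NB H v).filter (fun w => H.Adj u w)

def NO (v u : Fin 7) : Finset (Fin 7) :=
  (NB H v).filter (fun w => ¬H.Adj u w ∧ w ≠ u)

variable {H}

lemma mem_NB {v x : Fin 7} : x ∈ NB H v ↔ H.Adj v x := by
  simp [NB]

lemma mem_WW {v x : Fin 7} : x ∈ WW H v ↔ ¬H.Adj v x ∧ x ≠ v := by
  simp [WW]

lemma mem_NI {v u x : Fin 7} : x ∈ NI H v u ↔ H.Adj v x ∧ H.Adj u x := by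
  simp [NI, NB]

lemma mem_NO {v u x : Fin 7} : x ∈ NO H v u ↔ H.Adj v x ∧ ¬H.Adj u x ∧ x ≠ u := by
  simp [NO, NB, and_assoc]

lemma cover (v t : Fin 7) : t = v ∨ t ∈ NB H v ∨ t ∈ WW H v := by
  by_cases h1 : t = v
  · exact Or.inl h1
  by_cases h2 : H.Adj v t
  · exact Or.inr (Or.inl (mem_NB.mpr h2))
  · exact Or.inr (Or.inr (mem_WW.mpr ⟨h2, h1⟩))

lemma card_NB_WW (v : Fin 7) : (NB H v).card + (WW H v).card = 6 := by
  have h1 : (Finset.univ.erase v).filter (fun x => H.Adj v x) = NB H v := by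
    ext x
    simp only [Finset.mem_filter, Finset.mem_erase, Finset.mem_univ, true_and, mem_NB,
      and_true]
    constructor
    · exact fun h => h.2
    · exact fun h => ⟨(H.ne_of_adj h).symm, h⟩
  have h2 : (Finset.univ.erase v).filter (fun x => ¬H.Adj v x) = WW H v := by
    ext x
    simp only [Finset.mem_filter, Finset.mem_erase, Finset.mem_univ, true_and, mem_WW]
    tauto
  have h3 := Finset.card_filter_add_card_filter_not
    (s := Finset.univ.erase v) (p := fun x => H.Adj v x)
  have h4 : (Finset.univ.erase v).card = 6 := by
    rw [Finset.card_erase_of_mem (Finset.mem_univ v)]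
    simp
  rw [h1, h2] at h3
  omega

variable (hα : ∀ a b c : Fin 7, a ≠ b → a ≠ c → b ≠ c →
    H.Adj a b ∨ H.Adj a c ∨ H.Adj b c)
  (hK4' : ∀ a b c d : Fin 7, H.Adj a b → H.Adj a c → H.Adj a d →
    H.Adj b c → H.Adj b d → H.Adj c d → False)

include hα hK4'

lemma NI_le2 {v u : Fin 7} (hvu : H.Adj v u) : (NI H v u).card ≤ 2 := by
  by_contra hc
  push_neg at hc
  obtain ⟨p, q, r, hp, hq, hr, hpq, hpr, hqr⟩ := exists3' (by omega : 3 ≤ (NI H v u).card)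
  rw [mem_NI] at hp hq hr
  rcases hα p q r hpq hpr hqr with h | h | h
  · exact hK4' v u p q hvu hp.1 hq.1 hp.2 hq.2 h
  · exact hK4' v u p r hvu hp.1 hr.1 hp.2 hr.2 h
  · exact hK4' v u q r hvu hq.1 hr.1 hq.2 hr.2 h

lemma NO_le2 {v u : Fin 7} : (NO H v u).card ≤ 2 := by
  by_contra hc
  push_neg at hc
  obtain ⟨p, q, r, hp, hq, hr, hpq, hpr, hqr⟩ := exists3' (by omega : 3 ≤ (NO H v u).card)
  rw [mem_NO] at hp hq hr
  have adj : ∀ x y : Fin 7, H.Adj v x → ¬H.Adj u x → x ≠ u → H.Adj v y → ¬H.Adj u y →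
      y ≠ u → x ≠ y → H.Adj x y := by
    intro x y _ hux hxu _ huy hyu hxy
    rcases hα u x y (Ne.symm hxu) (Ne.symm hyu) hxy with h | h | h
    · exact absurd h hux
    · exact absurd h huy
    · exact h
  exact hK4' v p q r hp.1 hq.1 hr.1
    (adj p q hp.1 hp.2.1 hp.2.2 hq.1 hq.2.1 hq.2.2 hpq)
    (adj p r hp.1 hp.2.1 hp.2.2 hr.1 hr.2.1 hr.2.2 hpr)
    (adj q r hq.1 hq.2.1 hq.2.2 hr.1 hr.2.1 hr.2.2 hqr)

omit hα hK4' in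
lemma split_card {v u : Fin 7} (hu : u ∈ NB H v) :
    (NI H v u).card + (NO H v u).card + 1 = (NB H v).card := by
  have h2 := Finset.card_filter_add_card_filter_not
    (s := NB H v) (p := fun w => H.Adj u w)
  have h3 : (NB H v).filter (fun w => ¬H.Adj u w) = insert u (NO H v u) := by
    ext w
    simp only [Finset.mem_filter, Finset.mem_insert, mem_NO, mem_NB]
    rw [mem_NB] at hu
    constructor
    · rintro ⟨hw, hnw⟩
      by_cases hwu : w = u
      · exact Or.inl hwu
      · exact Or.inr ⟨hw, hnw, hwu⟩
    · rintro (rfl | ⟨hw, hnw, _⟩)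
      · exact ⟨hu, H.irrefl⟩
      · exact ⟨hw, hnw⟩
  rw [h3, Finset.card_insert_of_notMem (by simp [mem_NO])] at h2
  have : (NB H v).filter (fun w => H.Adj u w) = NI H v u := rfl
  rw [this] at h2
  omega

lemma deg_ge3 (v : Fin 7) : 3 ≤ (NB H v).card := by
  by_contra h
  push_neg at h
  have hW : 4 ≤ (WW H v).card := by have := card_NB_WW (H := H) v; omega
  obtain ⟨a, b, c, d, ha, hb, hc, hd, h1, h2, h3, h4, h5, h6⟩ := exists4' hW
  rw [mem_WW] at ha hb hc hd
  have adj : ∀ x y : Fin 7, ¬H.Adj v x → x ≠ v → ¬H.Adj v y → y ≠ v → x ≠ y →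
      H.Adj x y := by
    intro x y hvx hxv hvy hyv hxy
    rcases hα v x y (Ne.symm hxv) (Ne.symm hyv) hxy with h | h | h
    · exact absurd h hvx
    · exact absurd h hvy
    · exact h
  exact hK4' a b c d
    (adj a b ha.1 ha.2 hb.1 hb.2 h1) (adj a c ha.1 ha.2 hc.1 hc.2 h2)
    (adj a d ha.1 ha.2 hd.1 hd.2 h3) (adj b c hb.1 hb.2 hc.1 hc.2 h4)
    (adj b d hb.1 hb.2 hd.1 hd.2 h5) (adj c d hc.1 hc.2 hd.1 hd.2 h6)

lemma deg_le5 (v : Fin 7) : (NB H v).card ≤ 5 := by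
  by_contra h
  push_neg at h
  have hpos : 0 < (NB H v).card := by omega
  obtain ⟨u, hu⟩ := Finset.card_pos.mp hpos
  have hs := split_card hu
  have h1 := NI_le2 hα hK4' (mem_NB.mp hu)
  have h2 := NO_le2 hα hK4' (v := v) (u := u)
  omega

end K7Lemma

namespace K7Lemma

variable {H : SimpleGraph (Fin 7)} [DecidableRel H.Adj]
variable (hα : ∀ a b c : Fin 7, a ≠ b → a ≠ c → b ≠ c →
    H.Adj a b ∨ H.Adj a c ∨ H.Adj b c)
  (hK4' : ∀ a b c d : Fin 7, H.Adj a b → H.Adj a c → H.Adj a d →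
    H.Adj b c → H.Adj b d → H.Adj c d → False)

def Concl (H : SimpleGraph (Fin 7)) : Prop :=
  ∃ s : Fin 4 → Set (Fin 7),
    (∀ i, HubSet H (s i)) ∧
    (∀ i j, i ≠ j → Disjoint (s i) (s j)) ∧
    (∀ i j, i ≠ j → ∃ a ∈ s i, ∃ b ∈ s j, H.Adj a b)

include hα hK4'

lemma case_deg3 {v : Fin 7} (hv3 : (NB H v).card = 3) : Concl H := by
  obtain ⟨a, b, c, hab, hac, hbc, hNB⟩ := Finset.card_eq_three.mp hv3
  have hva : H.Adj v a := by rw [← mem_NB (v := v) (x := a), hNB]; simp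
  have hvb : H.Adj v b := by rw [← mem_NB (v := v) (x := b), hNB]; simp
  have hvc : H.Adj v c := by rw [← mem_NB (v := v) (x := c), hNB]; simp
  have hW3 : (WW H v).card = 3 := by have := card_NB_WW (H := H) v; omega
  obtain ⟨x, y, z, hxy, hxz, hyz, hWW⟩ := Finset.card_eq_three.mp hW3
  have hx : ¬H.Adj v x ∧ x ≠ v := mem_WW.mp (by rw [hWW]; simp)
  have hy : ¬H.Adj v y ∧ y ≠ v := mem_WW.mp (by rw [hWW]; simp)
  have hz : ¬H.Adj v z ∧ z ≠ v := mem_WW.mp (by rw [hWW]; simp)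
  have hadjW : ∀ p q : Fin 7, ¬H.Adj v p → p ≠ v → ¬H.Adj v q → q ≠ v → p ≠ q →
      H.Adj p q := by
    intro p q hvp hpv hvq hqv hpq
    rcases hα v p q (Ne.symm hpv) (Ne.symm hqv) hpq with h | h | h
    · exact absurd h hvp
    · exact absurd h hvq
    · exact h
  have hxyA : H.Adj x y := hadjW x y hx.1 hx.2 hy.1 hy.2 hxy
  have hxzA : H.Adj x z := hadjW x z hx.1 hx.2 hz.1 hz.2 hxz
  have hyzA : H.Adj y z := hadjW y z hy.1 hy.2 hz.1 hz.2 hyz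
  have hne : ∀ w t : Fin 7, ¬H.Adj v w → H.Adj v t → w ≠ t := by
    intro w t hw ht h
    exact hw (by rw [h]; exact ht)
  have hxa := hne x a hx.1 hva
  have hxb := hne x b hx.1 hvb
  have hxc := hne x c hx.1 hvc
  have hya := hne y a hy.1 hva
  have hyb := hne y b hy.1 hvb
  have hyc := hne y c hy.1 hvc
  have hza := hne z a hz.1 hva
  have hzb := hne z b hz.1 hvb
  have hzc := hne z c hz.1 hvc
  have key : ∀ w w1 w2 : Fin 7, ¬H.Adj v w → w ≠ v → WW H v = {w, w1, w2} →
      H.Adj w a ∨ H.Adj w b ∨ H.Adj w c := by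
    intro w w1 w2 hvw hwv hWeq
    by_contra hno
    push_neg at hno
    obtain ⟨n1, n2, n3⟩ := hno
    have hsub : NB H w ⊆ {w1, w2} := by
      intro t ht
      rw [mem_NB] at ht
      have htw : t ≠ w := fun h => H.irrefl (by rw [h] at ht; exact ht)
      rcases cover (H := H) v t with rfl | hmem | hmem
      · exact absurd ht.symm hvw
      · rw [hNB] at hmem
        simp only [Finset.mem_insert, Finset.mem_singleton] at hmem
        rcases hmem with rfl | rfl | rfl
        · exact absurd ht n1
        · exact absurd ht n2
        · exact absurd ht n3
      · rw [hWeq] at hmem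
        simp only [Finset.mem_insert, Finset.mem_singleton] at hmem
        rcases hmem with rfl | rfl | rfl
        · exact absurd rfl htw
        · simp
        · simp
    have h3 := deg_ge3 hα hK4' w
    have hcard := Finset.card_le_card hsub
    have h2 := cardle2 w1 w2
    omega
  have hxnb := key x y z hx.1 hx.2 hWW
  have hynb := key y x z hy.1 hy.2 (by rw [hWW]; ext t; simp; tauto)
  have hznb := key z x y hz.1 hz.2 (by rw [hWW]; ext t; simp; tauto)
  refine build4 (hub_single x) (hub_single y) (hub_single z) (hub_quad hva hvb hvc)
    (by simp [hxy]) (by simp [hxz]) (by simp [hx.2, hxa, hxb, hxc])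
    (by simp [hyz]) (by simp [hy.2, hya, hyb, hyc])
    (by simp [hz.2, hza, hzb, hzc])
    ⟨x, rfl, y, rfl, hxyA⟩ ⟨x, rfl, z, rfl, hxzA⟩ ?_
    ⟨y, rfl, z, rfl, hyzA⟩ ?_ ?_
  · rcases hxnb with h | h | h
    · exact ⟨x, rfl, a, by simp, h⟩
    · exact ⟨x, rfl, b, by simp, h⟩
    · exact ⟨x, rfl, c, by simp, h⟩
  · rcases hynb with h | h | h
    · exact ⟨y, rfl, a, by simp, h⟩
    · exact ⟨y, rfl, b, by simp, h⟩
    · exact ⟨y, rfl, c, by simp, h⟩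
  · rcases hznb with h | h | h
    · exact ⟨z, rfl, a, by simp, h⟩
    · exact ⟨z, rfl, b, by simp, h⟩
    · exact ⟨z, rfl, c, by simp, h⟩

end K7Lemma

namespace K7Lemma

variable {H : SimpleGraph (Fin 7)} [DecidableRel H.Adj]
variable (hα : ∀ a b c : Fin 7, a ≠ b → a ≠ c → b ≠ c →
    H.Adj a b ∨ H.Adj a c ∨ H.Adj b c)
  (hK4' : ∀ a b c d : Fin 7, H.Adj a b → H.Adj a c → H.Adj a d →
    H.Adj b c → H.Adj b d → H.Adj c d → False)

lemma disj1 {a : Fin 7} {s : Set (Fin 7)} (h : a ∉ s) : Disjoint ({a} : Set (Fin 7)) s :=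
  Set.disjoint_singleton_left.mpr h

lemma disj2 {a b c d : Fin 7} (h1 : a ≠ c) (h2 : a ≠ d) (h3 : b ≠ c) (h4 : b ≠ d) :
    Disjoint ({a, b} : Set (Fin 7)) {c, d} := by
  rw [Set.disjoint_left]
  rintro t ht hc
  simp only [Set.mem_insert_iff, Set.mem_singleton_iff] at ht hc
  rcases ht with rfl | rfl <;> rcases hc with rfl | rfl <;> simp_all

include hα hK4'

lemma case_deg5 {v : Fin 7} (hv5 : (NB H v).card = 5) : Concl H := by
  have hNI2 : ∀ u, u ∈ NB H v → (NI H v u).card = 2 := by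
    intro u hu
    have hs := split_card (H := H) hu
    have h1 := NI_le2 hα hK4' (mem_NB.mp hu)
    have h2 := NO_le2 hα hK4' (v := v) (u := u)
    omega
  have hpos : 0 < (NB H v).card := by omega
  obtain ⟨u0, hu0⟩ := Finset.card_pos.mp hpos
  obtain ⟨u1, u4, h14, hN0⟩ := Finset.card_eq_two.mp (hNI2 u0 hu0)
  have hu1 : u1 ∈ NI H v u0 := by rw [hN0]; simp
  have hu4 : u4 ∈ NI H v u0 := by rw [hN0]; simp
  rw [mem_NI] at hu1 hu4
  have hvu0 := mem_NB.mp hu0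
  have hu1NB : u1 ∈ NB H v := mem_NB.mpr hu1.1
  have hmem01 : u0 ∈ NI H v u1 := mem_NI.mpr ⟨hvu0, hu1.2.symm⟩
  obtain ⟨u2, hu2ne, hN1⟩ := other2 (hNI2 u1 hu1NB) hmem01
  have hu2 : u2 ∈ NI H v u1 := by rw [hN1]; simp
  rw [mem_NI] at hu2
  have h24 : u2 ≠ u4 := by
    intro h
    exact hK4' v u0 u1 u4 hvu0 hu1.1 hu4.1 hu1.2 hu4.2 (h ▸ hu2.2)
  have h01 : u0 ≠ u1 := hu1.2.ne
  have h04 : u0 ≠ u4 := hu4.2.ne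
  have h12 : u1 ≠ u2 := hu2.2.ne
  have h02 : u0 ≠ u2 := hu2ne.symm
  have hsub3 : ({u0, u1, u2, u4} : Finset (Fin 7)) ⊆ NB H v := by
    intro t ht
    simp only [Finset.mem_insert, Finset.mem_singleton] at ht
    rcases ht with rfl | rfl | rfl | rfl
    · exact hu0
    · exact mem_NB.mpr hu1.1
    · exact mem_NB.mpr hu2.1
    · exact mem_NB.mpr hu4.1
  have hc4 : ({u0, u1, u2, u4} : Finset (Fin 7)).card = 4 := cardeq4 h01 h02 h04 h12 h14 h24
  have hsd : 0 < (NB H v \ {u0, u1, u2, u4}).card := by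
    rw [Finset.card_sdiff_of_subset hsub3]; omega
  obtain ⟨u3, hu3⟩ := Finset.card_pos.mp hsd
  rw [Finset.mem_sdiff] at hu3
  have hu3ne : u3 ≠ u0 ∧ u3 ≠ u1 ∧ u3 ≠ u2 ∧ u3 ≠ u4 := by
    have := hu3.2
    simp only [Finset.mem_insert, Finset.mem_singleton] at this
    push_neg at this
    exact this
  have hvu3 := mem_NB.mp hu3.1
  have hNBeq : NB H v = {u0, u1, u2, u3, u4} := by
    refine (Finset.eq_of_subset_of_card_le ?_ ?_).symm
    · intro t ht
      simp only [Finset.mem_insert, Finset.mem_singleton] at ht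
      rcases ht with rfl | rfl | rfl | rfl | rfl
      · exact hu0
      · exact mem_NB.mpr hu1.1
      · exact mem_NB.mpr hu2.1
      · exact hu3.1
      · exact mem_NB.mpr hu4.1
    · rw [cardeq5 h01 h02 hu3ne.1.symm h04 h12 hu3ne.2.1.symm h14 hu3ne.2.2.1.symm h24
        hu3ne.2.2.2]
      omega
  have hn03 : ¬H.Adj u0 u3 := by
    intro h
    have : u3 ∈ NI H v u0 := mem_NI.mpr ⟨hvu3, h⟩
    rw [hN0] at this
    simp only [Finset.mem_insert, Finset.mem_singleton] at this
    rcases this with h | h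
    · exact hu3ne.2.1 h
    · exact hu3ne.2.2.2 h
  have hn13 : ¬H.Adj u1 u3 := by
    intro h
    have : u3 ∈ NI H v u1 := mem_NI.mpr ⟨hvu3, h⟩
    rw [hN1] at this
    simp only [Finset.mem_insert, Finset.mem_singleton] at this
    rcases this with h | h
    · exact hu3ne.1 h
    · exact hu3ne.2.2.1 h
  have hsub : NI H v u3 ⊆ {u2, u4} := by
    intro t ht
    rw [mem_NI] at ht
    have htNB : t ∈ NB H v := mem_NB.mpr ht.1
    rw [hNBeq] at htNB
    simp only [Finset.mem_insert, Finset.mem_singleton] at htNB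
    rcases htNB with rfl | rfl | rfl | rfl | rfl
    · exact absurd ht.2.symm hn03
    · exact absurd ht.2.symm hn13
    · simp
    · exact absurd ht.2 H.irrefl
    · simp
  have hNI3 : NI H v u3 = {u2, u4} :=
    Finset.eq_of_subset_of_card_le hsub (by rw [hNI2 u3 hu3.1]; exact cardle2 u2 u4)
  have h23A : H.Adj u3 u2 := by
    have : u2 ∈ NI H v u3 := by rw [hNI3]; simp
    exact (mem_NI.mp this).2
  have h34A : H.Adj u3 u4 := by
    have : u4 ∈ NI H v u3 := by rw [hNI3]; simp
    exact (mem_NI.mp this).2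
  have hv0 := hvu0.ne
  have hv1 := hu1.1.ne
  have hv2 := hu2.1.ne
  have hv3 := hvu3.ne
  have hv4 := hu4.1.ne
  refine build4 (hub_single v) (hub_pair hu1.2) (hub_single u2) (hub_pair h34A)
    (disj1 (by simp [hv0, hv1])) (disj1 (by simp [hv2])) (disj1 (by simp [hv3, hv4]))
    ((disj1 (a := u2) (s := {u0, u1}) (by simp [hu2ne, h12.symm])).symm)
    (disj2 hu3ne.1.symm h04 hu3ne.2.1.symm h14)
    (disj1 (a := u2) (s := {u3, u4}) (by simp [h24, Ne.symm hu3ne.2.2.1]))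
    ⟨v, rfl, u0, by simp, hvu0⟩ ⟨v, rfl, u2, rfl, hu2.1⟩ ⟨v, rfl, u3, by simp, hvu3⟩
    ⟨u1, by simp, u2, rfl, hu2.2⟩ ⟨u0, by simp, u4, by simp, hu4.2⟩
    ⟨u2, rfl, u3, by simp, h23A.symm⟩

end K7Lemma

namespace K7Lemma

variable {H : SimpleGraph (Fin 7)} [DecidableRel H.Adj]
variable (hα : ∀ a b c : Fin 7, a ≠ b → a ≠ c → b ≠ c →
    H.Adj a b ∨ H.Adj a c ∨ H.Adj b c)
  (hK4' : ∀ a b c d : Fin 7, H.Adj a b → H.Adj a c → H.Adj a d →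
    H.Adj b c → H.Adj b d → H.Adj c d → False)

omit hα hK4' in
lemma cardeq2 {a b : Fin 7} (h : a ≠ b) : ({a, b} : Finset (Fin 7)).card = 2 := by
  rw [Finset.card_insert_of_notMem (by simp [h]), Finset.card_singleton]

include hα hK4'

lemma case_deg4 (h4 : ∀ w : Fin 7, (NB H w).card = 4) (v : Fin 7) : Concl H := by
  have hv4 := h4 v
  have hW2 : (WW H v).card = 2 := by have := card_NB_WW (H := H) v; omega
  obtain ⟨x, y, hxyne, hWeq⟩ := Finset.card_eq_two.mp hW2
  have hx : ¬H.Adj v x ∧ x ≠ v := mem_WW.mp (by rw [hWeq]; simp)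
  have hy : ¬H.Adj v y ∧ y ≠ v := mem_WW.mp (by rw [hWeq]; simp)
  have hxyA : H.Adj x y := by
    rcases hα v x y (Ne.symm hx.2) (Ne.symm hy.2) hxyne with h | h | h
    · exact absurd h hx.1
    · exact absurd h hy.1
    · exact h
  have hneWN : ∀ w t : Fin 7, ¬H.Adj v w → H.Adj v t → w ≠ t := by
    intro w t hw ht h
    exact hw (by rw [h]; exact ht)
  have hNI1 : ∀ u ∈ NB H v, 1 ≤ (NI H v u).card ∧ (NI H v u).card ≤ 2 := by
    intro u hu
    have hs := split_card (H := H) hu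
    have h1 := NI_le2 hα hK4' (mem_NB.mp hu)
    have h2 := NO_le2 hα hK4' (v := v) (u := u)
    omega
  by_cases hud : ∃ u ∈ NB H v, 2 ≤ (NI H v u).card
  · obtain ⟨u, huNB, hcard⟩ := hud
    have hvu := mem_NB.mp huNB
    obtain ⟨p, hp, q, hq, hpq⟩ := Finset.one_lt_card.mp (show 1 < (NI H v u).card by omega)
    rw [mem_NI] at hp hq
    have hnpq : ¬H.Adj p q := fun h => hK4' v u p q hvu hp.1 hq.1 hp.2 hq.2 h
    have hup : u ≠ p := hp.2.ne
    have huq : u ≠ q := hq.2.ne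
    have hsub3 : ({u, p, q} : Finset (Fin 7)) ⊆ NB H v := by
      intro t ht
      simp only [Finset.mem_insert, Finset.mem_singleton] at ht
      rcases ht with rfl | rfl | rfl
      · exact huNB
      · exact mem_NB.mpr hp.1
      · exact mem_NB.mpr hq.1
    have hsd : 0 < (NB H v \ {u, p, q}).card := by
      rw [Finset.card_sdiff_of_subset hsub3, cardeq3 hup huq hpq]; omega
    obtain ⟨r, hr⟩ := Finset.card_pos.mp hsd
    rw [Finset.mem_sdiff] at hr
    have hrne : r ≠ u ∧ r ≠ p ∧ r ≠ q := by
      have := hr.2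
      simp only [Finset.mem_insert, Finset.mem_singleton] at this
      push_neg at this
      exact this
    have hvr := mem_NB.mp hr.1
    have hNBeq : NB H v = {u, p, q, r} := by
      refine (Finset.eq_of_subset_of_card_le ?_ ?_).symm
      · intro t ht
        simp only [Finset.mem_insert, Finset.mem_singleton] at ht
        rcases ht with rfl | rfl | rfl | rfl
        · exact huNB
        · exact mem_NB.mpr hp.1
        · exact mem_NB.mpr hq.1
        · exact hr.1
      · rw [cardeq4 hup huq hrne.1.symm hpq hrne.2.1.symm hrne.2.2.symm]; omega
    have hnur : ¬H.Adj u r := by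
      intro h
      have hsub2 : ({p, q, r} : Finset (Fin 7)) ⊆ NI H v u := by
        intro t ht
        simp only [Finset.mem_insert, Finset.mem_singleton] at ht
        rcases ht with rfl | rfl | rfl
        · exact mem_NI.mpr ⟨hp.1, hp.2⟩
        · exact mem_NI.mpr ⟨hq.1, hq.2⟩
        · exact mem_NI.mpr ⟨hvr, h⟩
      have hcard2 := Finset.card_le_card hsub2
      rw [cardeq3 hpq hrne.2.1.symm hrne.2.2.symm] at hcard2
      have := NI_le2 hα hK4' (v := v) hvu
      omega
    have hxu := hneWN x u hx.1 hvu
    have hxp := hneWN x p hx.1 hp.1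
    have hxq := hneWN x q hx.1 hq.1
    have hxr := hneWN x r hx.1 hvr
    have hyu := hneWN y u hy.1 hvu
    have hyp := hneWN y p hy.1 hp.1
    have hyq := hneWN y q hy.1 hq.1
    have hyr := hneWN y r hy.1 hvr
    by_cases hrp : H.Adj r p <;> by_cases hrq : H.Adj r q
    · -- C4 : v, u, p, {r,q}
      refine build4 (hub_single v) (hub_single u) (hub_single p) (hub_pair hrq)
        (disj1 (by simp [hvu.ne])) (disj1 (by simp [hp.1.ne]))
        (disj1 (by simp [hvr.ne, hq.1.ne]))
        (disj1 (by simp [hup])) (disj1 (by simp [Ne.symm hrne.1, huq]))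
        (disj1 (by simp [Ne.symm hrne.2.1, hpq]))
        ⟨v, rfl, u, rfl, hvu⟩ ⟨v, rfl, p, rfl, hp.1⟩ ⟨v, rfl, r, by simp, hvr⟩
        ⟨u, rfl, p, rfl, hp.2⟩ ⟨u, rfl, q, by simp, hq.2⟩
        ⟨p, rfl, r, by simp, hrp.symm⟩
    · -- P4 : q - u - p - r
      have hsubr : NB H r ⊆ {v, p, x, y} := by
        intro t ht
        rw [mem_NB] at ht
        rcases cover (H := H) v t with rfl | hm | hm
        · simp
        · rw [hNBeq] at hm
          simp only [Finset.mem_insert, Finset.mem_singleton] at hm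
          rcases hm with rfl | rfl | rfl | rfl
          · exact absurd ht.symm hnur
          · simp
          · exact absurd ht hrq
          · exact absurd ht H.irrefl
        · rw [hWeq] at hm
          simp only [Finset.mem_insert, Finset.mem_singleton] at hm
          rcases hm with rfl | rfl <;> simp
      have hNBr : NB H r = {v, p, x, y} :=
        Finset.eq_of_subset_of_card_le hsubr (by rw [h4 r]; exact cardle4 v p x y)
      have hrx : H.Adj r x := mem_NB.mp (by rw [hNBr]; simp)
      have hry : H.Adj r y := mem_NB.mp (by rw [hNBr]; simp)
      have hsubq : NB H q ⊆ {v, u, x, y} := by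
        intro t ht
        rw [mem_NB] at ht
        rcases cover (H := H) v t with rfl | hm | hm
        · simp
        · rw [hNBeq] at hm
          simp only [Finset.mem_insert, Finset.mem_singleton] at hm
          rcases hm with rfl | rfl | rfl | rfl
          · simp
          · exact absurd ht.symm hnpq
          · exact absurd ht H.irrefl
          · exact absurd ht.symm hrq
        · rw [hWeq] at hm
          simp only [Finset.mem_insert, Finset.mem_singleton] at hm
          rcases hm with rfl | rfl <;> simp
      have hNBq : NB H q = {v, u, x, y} :=
        Finset.eq_of_subset_of_card_le hsubq (by rw [h4 q]; exact cardle4 v u x y)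
      have hqx : H.Adj q x := mem_NB.mp (by rw [hNBq]; simp)
      have hqy : H.Adj q y := mem_NB.mp (by rw [hNBq]; simp)
      refine build4 (hub_single x) (hub_single y) (hub_single r)
        (hub_triple hq.2 hp.2)
        (disj1 (by simp [hxyne])) (disj1 (by simp [hxr]))
        (disj1 (by simp [hxq, hxu, hxp]))
        (disj1 (by simp [hyr])) (disj1 (by simp [hyq, hyu, hyp]))
        (disj1 (by simp [hrne.1, hrne.2.1, hrne.2.2]))
        ⟨x, rfl, y, rfl, hxyA⟩ ⟨x, rfl, r, rfl, hrx.symm⟩ ⟨x, rfl, q, by simp, hqx.symm⟩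
        ⟨y, rfl, r, rfl, hry.symm⟩ ⟨y, rfl, q, by simp, hqy.symm⟩
        ⟨r, rfl, p, by simp, hrp⟩
    · -- P4 : p - u - q - r
      have hsubr : NB H r ⊆ {v, q, x, y} := by
        intro t ht
        rw [mem_NB] at ht
        rcases cover (H := H) v t with rfl | hm | hm
        · simp
        · rw [hNBeq] at hm
          simp only [Finset.mem_insert, Finset.mem_singleton] at hm
          rcases hm with rfl | rfl | rfl | rfl
          · exact absurd ht.symm hnur
          · exact absurd ht hrp
          · simp
          · exact absurd ht H.irrefl
        · rw [hWeq] at hm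
          simp only [Finset.mem_insert, Finset.mem_singleton] at hm
          rcases hm with rfl | rfl <;> simp
      have hNBr : NB H r = {v, q, x, y} :=
        Finset.eq_of_subset_of_card_le hsubr (by rw [h4 r]; exact cardle4 v q x y)
      have hrx : H.Adj r x := mem_NB.mp (by rw [hNBr]; simp)
      have hry : H.Adj r y := mem_NB.mp (by rw [hNBr]; simp)
      have hsubp : NB H p ⊆ {v, u, x, y} := by
        intro t ht
        rw [mem_NB] at ht
        rcases cover (H := H) v t with rfl | hm | hm
        · simp
        · rw [hNBeq] at hm
          simp only [Finset.mem_insert, Finset.mem_singleton] at hm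
          rcases hm with rfl | rfl | rfl | rfl
          · simp
          · exact absurd ht H.irrefl
          · exact absurd ht hnpq
          · exact absurd ht.symm hrp
        · rw [hWeq] at hm
          simp only [Finset.mem_insert, Finset.mem_singleton] at hm
          rcases hm with rfl | rfl <;> simp
      have hNBp : NB H p = {v, u, x, y} :=
        Finset.eq_of_subset_of_card_le hsubp (by rw [h4 p]; exact cardle4 v u x y)
      have hpx : H.Adj p x := mem_NB.mp (by rw [hNBp]; simp)
      have hpy : H.Adj p y := mem_NB.mp (by rw [hNBp]; simp)
      refine build4 (hub_single x) (hub_single y) (hub_single r)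
        (hub_triple hp.2 hq.2)
        (disj1 (by simp [hxyne])) (disj1 (by simp [hxr]))
        (disj1 (by simp [hxq, hxu, hxp]))
        (disj1 (by simp [hyr])) (disj1 (by simp [hyq, hyu, hyp]))
        (disj1 (by simp [hrne.1, hrne.2.1, hrne.2.2]))
        ⟨x, rfl, y, rfl, hxyA⟩ ⟨x, rfl, r, rfl, hrx.symm⟩ ⟨x, rfl, p, by simp, hpx.symm⟩
        ⟨y, rfl, r, rfl, hry.symm⟩ ⟨y, rfl, p, by simp, hpy.symm⟩
        ⟨r, rfl, q, by simp, hrq⟩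
    · exfalso
      rcases hα r p q hrne.2.1 hrne.2.2 hpq with h | h | h
      · exact hrp h
      · exact hrq h
      · exact hnpq h
  · -- all inner degrees equal 1 : contradiction
    exfalso
    push_neg at hud
    have hNIeq1 : ∀ u ∈ NB H v, (NI H v u).card = 1 := by
      intro u hu
      have := hNI1 u hu
      have := hud u hu
      omega
    have hpos : 0 < (NB H v).card := by omega
    obtain ⟨p, hpNB⟩ := Finset.card_pos.mp hpos
    have hvp := mem_NB.mp hpNB
    obtain ⟨q, hNIp⟩ := Finset.card_eq_one.mp (hNIeq1 p hpNB)
    have hq : H.Adj v q ∧ H.Adj p q := mem_NI.mp (by rw [hNIp]; simp)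
    have hpq : p ≠ q := hq.2.ne
    have hqNB := mem_NB.mpr hq.1
    have hNIq : NI H v q = {p} := by
      obtain ⟨s, hs⟩ := Finset.card_eq_one.mp (hNIeq1 q hqNB)
      have hpmem : p ∈ NI H v q := mem_NI.mpr ⟨hvp, hq.2.symm⟩
      rw [hs] at hpmem
      simp only [Finset.mem_singleton] at hpmem
      rw [hs, hpmem]
    have hsub2 : ({p, q} : Finset (Fin 7)) ⊆ NB H v := by
      intro t ht
      simp only [Finset.mem_insert, Finset.mem_singleton] at ht
      rcases ht with rfl | rfl
      · exact hpNB
      · exact hqNB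
    have hsd : 0 < (NB H v \ {p, q}).card := by
      rw [Finset.card_sdiff_of_subset hsub2, cardeq2 hpq]; omega
    obtain ⟨r, hr⟩ := Finset.card_pos.mp hsd
    rw [Finset.mem_sdiff] at hr
    have hrne : r ≠ p ∧ r ≠ q := by
      have := hr.2
      simp only [Finset.mem_insert, Finset.mem_singleton] at this
      push_neg at this
      exact this
    have hvr := mem_NB.mp hr.1
    have hnpr : ¬H.Adj p r := by
      intro h
      have : r ∈ NI H v p := mem_NI.mpr ⟨hvr, h⟩
      rw [hNIp] at this
      simp only [Finset.mem_singleton] at this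
      exact hrne.2 this
    have hnqr : ¬H.Adj q r := by
      intro h
      have : r ∈ NI H v q := mem_NI.mpr ⟨hvr, h⟩
      rw [hNIq] at this
      simp only [Finset.mem_singleton] at this
      exact hrne.1 this
    have hsub3 : ({p, q, r} : Finset (Fin 7)) ⊆ NB H v := by
      intro t' ht'
      simp only [Finset.mem_insert, Finset.mem_singleton] at ht'
      rcases ht' with rfl | rfl | rfl
      · exact hpNB
      · exact hqNB
      · exact hr.1
    have hsd2 : 0 < (NB H v \ {p, q, r}).card := by
      rw [Finset.card_sdiff_of_subset hsub3, cardeq3 hpq hrne.1.symm hrne.2.symm]; omega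
    obtain ⟨t, ht⟩ := Finset.card_pos.mp hsd2
    rw [Finset.mem_sdiff] at ht
    have htne : t ≠ p ∧ t ≠ q ∧ t ≠ r := by
      have := ht.2
      simp only [Finset.mem_insert, Finset.mem_singleton] at this
      push_neg at this
      exact this
    have hvt := mem_NB.mp ht.1
    have hNBeq : NB H v = {p, q, r, t} := by
      refine (Finset.eq_of_subset_of_card_le ?_ ?_).symm
      · intro t' ht'
        simp only [Finset.mem_insert, Finset.mem_singleton] at ht'
        rcases ht' with rfl | rfl | rfl | rfl
        · exact hpNB
        · exact hqNB
        · exact hr.1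
        · exact ht.1
      · rw [cardeq4 hpq hrne.1.symm htne.1.symm hrne.2.symm htne.2.1.symm htne.2.2.symm]
        omega
    have hrt : H.Adj r t := by
      have hpos3 : 0 < (NI H v r).card := by rw [hNIeq1 r hr.1]; omega
      obtain ⟨s, hs⟩ := Finset.card_pos.mp hpos3
      rw [mem_NI] at hs
      have hsNB : s ∈ NB H v := mem_NB.mpr hs.1
      rw [hNBeq] at hsNB
      simp only [Finset.mem_insert, Finset.mem_singleton] at hsNB
      rcases hsNB with rfl | rfl | rfl | rfl
      · exact absurd hs.2.symm hnpr
      · exact absurd hs.2.symm hnqr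
      · exact absurd hs.2 H.irrefl
      · exact hs.2
    have hnpt : ¬H.Adj p t := by
      intro h
      have : t ∈ NI H v p := mem_NI.mpr ⟨hvt, h⟩
      rw [hNIp] at this
      simp only [Finset.mem_singleton] at this
      exact htne.2.1 this
    have hnqt : ¬H.Adj q t := by
      intro h
      have : t ∈ NI H v q := mem_NI.mpr ⟨hvt, h⟩
      rw [hNIq] at this
      simp only [Finset.mem_singleton] at this
      exact htne.1 this
    have hx : ¬H.Adj v x ∧ x ≠ v := mem_WW.mp (by rw [hWeq]; simp)
    have getadj : ∀ w a' : Fin 7, H.Adj v w → NB H w ⊆ {v, a', x, y} → H.Adj w x := by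
      intro w a' hvw hsubw
      have hNBw : NB H w = {v, a', x, y} :=
        Finset.eq_of_subset_of_card_le hsubw (by rw [h4 w]; exact cardle4 v a' x y)
      exact mem_NB.mp (by rw [hNBw]; simp)
    have hpx : H.Adj p x := by
      refine getadj p q hvp ?_
      intro t' ht'
      rw [mem_NB] at ht'
      rcases cover (H := H) v t' with rfl | hm | hm
      · simp
      · rw [hNBeq] at hm
        simp only [Finset.mem_insert, Finset.mem_singleton] at hm
        rcases hm with rfl | rfl | rfl | rfl
        · exact absurd ht' H.irrefl
        · simp
        · exact absurd ht' hnpr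
        · exact absurd ht' hnpt
      · rw [hWeq] at hm
        simp only [Finset.mem_insert, Finset.mem_singleton] at hm
        rcases hm with rfl | rfl <;> simp
    have hqx : H.Adj q x := by
      refine getadj q p hq.1 ?_
      intro t' ht'
      rw [mem_NB] at ht'
      rcases cover (H := H) v t' with rfl | hm | hm
      · simp
      · rw [hNBeq] at hm
        simp only [Finset.mem_insert, Finset.mem_singleton] at hm
        rcases hm with rfl | rfl | rfl | rfl
        · simp
        · exact absurd ht' H.irrefl
        · exact absurd ht' hnqr
        · exact absurd ht' hnqt
      · rw [hWeq] at hm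
        simp only [Finset.mem_insert, Finset.mem_singleton] at hm
        rcases hm with rfl | rfl <;> simp
    have hrx : H.Adj r x := by
      refine getadj r t hvr ?_
      intro t' ht'
      rw [mem_NB] at ht'
      rcases cover (H := H) v t' with rfl | hm | hm
      · simp
      · rw [hNBeq] at hm
        simp only [Finset.mem_insert, Finset.mem_singleton] at hm
        rcases hm with rfl | rfl | rfl | rfl
        · exact absurd ht'.symm hnpr
        · exact absurd ht'.symm hnqr
        · exact absurd ht' H.irrefl
        · simp
      · rw [hWeq] at hm
        simp only [Finset.mem_insert, Finset.mem_singleton] at hm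
        rcases hm with rfl | rfl <;> simp
    have htx : H.Adj t x := by
      refine getadj t r hvt ?_
      intro t' ht'
      rw [mem_NB] at ht'
      rcases cover (H := H) v t' with rfl | hm | hm
      · simp
      · rw [hNBeq] at hm
        simp only [Finset.mem_insert, Finset.mem_singleton] at hm
        rcases hm with rfl | rfl | rfl | rfl
        · exact absurd ht'.symm hnpt
        · exact absurd ht'.symm hnqt
        · simp
        · exact absurd ht' H.irrefl
      · rw [hWeq] at hm
        simp only [Finset.mem_insert, Finset.mem_singleton] at hm
        rcases hm with rfl | rfl <;> simp
    have hy : ¬H.Adj v y ∧ y ≠ v := mem_WW.mp (by rw [hWeq]; simp)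
    have hxyA : H.Adj x y := by
      rcases hα v x y (Ne.symm hx.2) (Ne.symm hy.2) hxyne with h | h | h
      · exact absurd h hx.1
      · exact absurd h hy.1
      · exact h
    have hneWN : ∀ w t' : Fin 7, ¬H.Adj v w → H.Adj v t' → w ≠ t' := by
      intro w t' hw ht' h
      exact hw (by rw [h]; exact ht')
    have hyp := hneWN y p hy.1 hvp
    have hyq := hneWN y q hy.1 hq.1
    have hyr := hneWN y r hy.1 hvr
    have hyt := hneWN y t hy.1 hvt
    have hsubx : ({p, q, r, t, y} : Finset (Fin 7)) ⊆ NB H x := by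
      intro t' ht'
      simp only [Finset.mem_insert, Finset.mem_singleton] at ht'
      rcases ht' with rfl | rfl | rfl | rfl | rfl
      · exact mem_NB.mpr hpx.symm
      · exact mem_NB.mpr hqx.symm
      · exact mem_NB.mpr hrx.symm
      · exact mem_NB.mpr htx.symm
      · exact mem_NB.mpr hxyA
    have hcardx := Finset.card_le_card hsubx
    rw [cardeq5 hpq hrne.1.symm htne.1.symm hyp.symm hrne.2.symm htne.2.1.symm hyq.symm
      htne.2.2.symm hyr.symm hyt.symm, h4 x] at hcardx
    omega

end K7Lemma

namespace K7Lemma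

lemma key7 (H : SimpleGraph (Fin 7)) [DecidableRel H.Adj]
    (hα : ∀ a b c : Fin 7, a ≠ b → a ≠ c → b ≠ c →
      H.Adj a b ∨ H.Adj a c ∨ H.Adj b c) :
    Concl H := by
  by_cases hK4 : ∃ a b c d : Fin 7, H.Adj a b ∧ H.Adj a c ∧ H.Adj a d ∧
      H.Adj b c ∧ H.Adj b d ∧ H.Adj c d
  · obtain ⟨a, b, c, d, h1, h2, h3, h4, h5, h6⟩ := hK4
    exact build4 (hub_single a) (hub_single b) (hub_single c) (hub_single d)
      (disj1 (by simp [h1.ne])) (disj1 (by simp [h2.ne])) (disj1 (by simp [h3.ne]))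
      (disj1 (by simp [h4.ne])) (disj1 (by simp [h5.ne])) (disj1 (by simp [h6.ne]))
      ⟨a, rfl, b, rfl, h1⟩ ⟨a, rfl, c, rfl, h2⟩ ⟨a, rfl, d, rfl, h3⟩
      ⟨b, rfl, c, rfl, h4⟩ ⟨b, rfl, d, rfl, h5⟩ ⟨c, rfl, d, rfl, h6⟩
  · have hK4' : ∀ a b c d : Fin 7, H.Adj a b → H.Adj a c → H.Adj a d →
        H.Adj b c → H.Adj b d → H.Adj c d → False :=
      fun a b c d h1 h2 h3 h4 h5 h6 => hK4 ⟨a, b, c, d, h1, h2, h3, h4, h5, h6⟩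
    by_cases h3c : ∃ v : Fin 7, (NB H v).card = 3
    · obtain ⟨v, hv⟩ := h3c
      exact case_deg3 hα hK4' hv
    by_cases h5c : ∃ v : Fin 7, (NB H v).card = 5
    · obtain ⟨v, hv⟩ := h5c
      exact case_deg5 hα hK4' hv
    · have h4all : ∀ w : Fin 7, (NB H w).card = 4 := by
        intro w
        have hge := deg_ge3 hα hK4' w
        have hle := deg_le5 hα hK4' w
        have hn3 : (NB H w).card ≠ 3 := fun h => h3c ⟨w, h⟩
        have hn5 : (NB H w).card ≠ 5 := fun h => h5c ⟨w, h⟩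
        omega
      exact case_deg4 hα hK4' h4all 0

end K7Lemma


lemma HubSet.connected {V : Type*} {G : SimpleGraph V} {s : Set V} (hs : HubSet G s) :
    (G.induce s).Connected := by
  obtain ⟨h, hh, hadj⟩ := hs
  rw [SimpleGraph.connected_iff]
  have key : ∀ z : s, (G.induce s).Reachable z ⟨h, hh⟩ := by
    rintro ⟨z, hz⟩
    rcases hadj z hz with rfl | hA
    · exact SimpleGraph.Reachable.refl _
    · exact SimpleGraph.Adj.reachable (by exact hA.symm)
  exact ⟨fun x y => (key x).trans (key y).symm, ⟨⟨h, hh⟩⟩⟩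


/-- Every claw-free, `K₅`-minor-free graph has maximum degree at most 6. -/
theorem claw_free_K5_minor_free_max_degree_six {V : Type*} [Fintype V]
    (G : SimpleGraph V) [DecidableRel G.Adj]
    (hclaw : G.ClawFree) (hK5 : ¬ G.HasMinor (⊤ : SimpleGraph (Fin 5))) :
    ∀ v : V, G.degree v ≤ 6 := by
  intro v
  by_contra hdeg
  push_neg at hdeg
  have h7 : 7 ≤ (G.neighborFinset v).card := hdeg
  obtain ⟨t, hts, htc⟩ := Finset.exists_subset_card_eq h7
  let e := t.equivFinOfCardEq htc
  let g : Fin 7 → V := fun i => (e.symm i : V)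
  have hginj : Function.Injective g := fun i j hij => by
    apply e.symm.injective; exact Subtype.ext hij
  have hgadj : ∀ i, G.Adj v (g i) := fun i => by
    have : (g i) ∈ G.neighborFinset v := hts (e.symm i).2
    rwa [SimpleGraph.mem_neighborFinset] at this
  let H : SimpleGraph (Fin 7) :=
    { Adj := fun i j => G.Adj (g i) (g j),
      symm := ⟨fun i j h => h.symm⟩,
      loopless := ⟨fun i h => G.irrefl h⟩ }
  haveI : DecidableRel H.Adj := fun i j => inferInstanceAs (Decidable (G.Adj _ _))
  have hα : ∀ a b c : Fin 7, a ≠ b → a ≠ c → b ≠ c →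
      H.Adj a b ∨ H.Adj a c ∨ H.Adj b c := by
    intro a b c hab hac hbc
    by_contra hno
    push_neg at hno
    obtain ⟨h1, h2, h3⟩ := hno
    apply hclaw.false
    refine ⟨⟨Sum.elim (fun _ => v) (fun x => g (![a,b,c] x)), ?_⟩, ?_⟩
    · rintro (x | x) (y | y) hxy
      · simp [Fin.eq_zero x, Fin.eq_zero y]
      · exfalso
        simp only [Sum.elim_inl, Sum.elim_inr] at hxy
        exact G.irrefl (hxy ▸ hgadj (![a,b,c] y))
      · exfalso
        simp only [Sum.elim_inl, Sum.elim_inr] at hxy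
        exact G.irrefl (hxy.symm ▸ hgadj (![a,b,c] x))
      · congr 1
        have : ![a,b,c] x = ![a,b,c] y := hginj (by simpa using hxy)
        fin_cases x <;> fin_cases y <;> simp_all
    · rintro (x | x) (y | y)
      · simp [completeBipartiteGraph]; exact G.irrefl
      · simp [completeBipartiteGraph]; exact hgadj (![a,b,c] y)
      · simp [completeBipartiteGraph]; exact (hgadj (![a,b,c] x)).symm
      · simp only [completeBipartiteGraph, Sum.elim_inr]
        constructor
        · intro hGxy
          exfalso
          fin_cases x <;> fin_cases y <;>
            simp_all [H] <;>
            first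
              | exact G.loopless _ hGxy
              | exact h1 hGxy | exact h2 hGxy | exact h3 hGxy
              | exact h1 hGxy.symm | exact h2 hGxy.symm | exact h3 hGxy.symm
        · simp
  obtain ⟨s, hhub, hdisj, hadj⟩ := K7Lemma.key7 H hα
  apply hK5
  refine ⟨Fin.cases {v} (fun i => g '' (s i)), ?_, ?_, ?_, ?_⟩
  · intro w
    rcases Fin.eq_zero_or_eq_succ w with rfl | ⟨i, rfl⟩ <;>
      simp only [Fin.cases_zero, Fin.cases_succ]
    · exact ⟨v, rfl⟩
    · obtain ⟨h, hh, _⟩ := hhub i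
      exact ⟨g h, ⟨h, hh, rfl⟩⟩
  · intro w
    rcases Fin.eq_zero_or_eq_succ w with rfl | ⟨i, rfl⟩ <;>
      simp only [Fin.cases_zero, Fin.cases_succ]
    · exact HubSet.connected ⟨v, rfl, fun x hx => Or.inl hx⟩
    · obtain ⟨h, hh, hA⟩ := hhub i
      apply HubSet.connected
      refine ⟨g h, ⟨h, hh, rfl⟩, ?_⟩
      rintro x ⟨z, hz, rfl⟩
      rcases hA z hz with rfl | hzA
      · exact Or.inl rfl
      · exact Or.inr hzA
  · intro w₁ w₂ hne
    rcases Fin.eq_zero_or_eq_succ w₁ with rfl | ⟨i, rfl⟩ <;>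
      rcases Fin.eq_zero_or_eq_succ w₂ with rfl | ⟨j, rfl⟩ <;>
      simp only [Fin.cases_zero, Fin.cases_succ]
    · exact absurd rfl hne
    · rw [Set.disjoint_left]
      rintro x rfl ⟨z, hz, hzx⟩
      exact G.irrefl (hzx ▸ hgadj z)
    · rw [Set.disjoint_right]
      rintro x rfl ⟨z, hz, hzx⟩
      exact G.irrefl (hzx ▸ hgadj z)
    · have hij : i ≠ j := fun h => hne (by rw [h])
      rw [Set.disjoint_left]
      rintro x ⟨z, hz, rfl⟩ ⟨z', hz', hzz'⟩
      have : z = z' := hginj hzz'.symm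
      exact (Set.disjoint_left.mp (hdisj i j hij) hz) (this ▸ hz')
  · intro w₁ w₂ hne
    rw [SimpleGraph.top_adj] at hne
    rcases Fin.eq_zero_or_eq_succ w₁ with rfl | ⟨i, rfl⟩ <;>
      rcases Fin.eq_zero_or_eq_succ w₂ with rfl | ⟨j, rfl⟩ <;>
      simp only [Fin.cases_zero, Fin.cases_succ]
    · exact absurd rfl hne
    · obtain ⟨h, hh, _⟩ := hhub j
      exact ⟨v, rfl, g h, ⟨h, hh, rfl⟩, hgadj h⟩
    · obtain ⟨h, hh, _⟩ := hhub i
      exact ⟨g h, ⟨h, hh, rfl⟩, v, rfl, (hgadj h).symm⟩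
    · have hij : i ≠ j := fun h => hne (by rw [h])
      obtain ⟨a, ha, b, hb, hab⟩ := hadj i j hij
      exact ⟨g a, ⟨a, ha, rfl⟩, g b, ⟨b, hb, rfl⟩, hab⟩
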